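/- Fix a column Cᵢ and its root left column Ĉ. Then ℓ(Ĉ) = ℓ(Cᵢ) + N̂(i) − Ň(i), where ℓ of a column is its number of inversions as a sequence (pairs of positions r < s with larger entry above smaller), N̂(i) = Σ_j N_{b_j,d_j}[C_{i,<r(b_j)} ∩ Ĉ] and Ň(i) = Σ_j N_{b_j,d_j}[C_{i,>r(b_j)} ∩ Ĉ], summing over pivot rows j with pivot entries b_j (left) and d_j (right, ∞ if absent). -/

import Mathlib

/-- Two-column HHL filling condition. -/
def HHL2 (c c' : ℕ) (C : Fin c → ℕ) (C' : Fin c' → ℕ) : Prop :=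
  Function.Injective C ∧ Function.Injective C' ∧
  (∀ (i : Fin c) (k : Fin c'), (k : ℕ) < (i : ℕ) → C i ≠ C' k) ∧
  (∀ (i : Fin c) (h : (i : ℕ) < c'), C i ≤ C' ⟨i, h⟩)

/-- Row `i` is a pivot row of the two-column configuration `CC'`:
either the left entry is strictly smaller than the right entry, or the row
lies below the bottom of the right column. -/
def PivotRow (c c' : ℕ) (C : Fin c → ℕ) (C' : Fin c' → ℕ) (i : Fin c) : Prop :=
  c' ≤ (i : ℕ) ∨ ∃ h : (i : ℕ) < c', C i < C' ⟨i, h⟩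

/-- The set of pivot entries of the left column. -/
def pivotEntries (c c' : ℕ) (C : Fin c → ℕ) (C' : Fin c' → ℕ) : Set ℕ :=
  {x | ∃ i : Fin c, PivotRow c c' C C' i ∧ C i = x}

/-- Failure of the Non-overlapping Condition: two distinct pivot rows whose
pivot intervals `[b_j, d_j]` (with `d_j = ∞` when the right entry is absent)
intersect. -/
def Overlap (c c' : ℕ) (C : Fin c → ℕ) (C' : Fin c' → ℕ) : Prop :=
  ∃ i j : Fin c, i ≠ j ∧ PivotRow c c' C C' i ∧ PivotRow c c' C C' j ∧
    ∃ z : ℕ, C i ≤ z ∧ (∀ h : (i : ℕ) < c', z ≤ C' ⟨i, h⟩) ∧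
      C j ≤ z ∧ (∀ h : (j : ℕ) < c', z ≤ C' ⟨j, h⟩)

/-- Number of inversions of a column, viewed as a sequence: pairs of rows
`r < s` with the larger entry above the smaller. -/
noncomputable def colInvF (k : ℕ) (C : Fin k → ℕ) : ℕ :=
  Set.ncard {p : Fin k × Fin k | p.1 < p.2 ∧ C p.2 < C p.1}

/-- `N̂(i)`: over all pivot rows `r`, the entries of `Cᵢ` strictly above row `r`
that also appear in `Croot` and lie strictly between `b = Croot r` and
`d = Cᵢ r` (no upper constraint when `d` is absent). -/
noncomputable def NhatF (c c' : ℕ) (Croot : Fin c → ℕ) (C' : Fin c' → ℕ) : ℕ :=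
  Set.ncard {p : Fin c × Fin c' | PivotRow c c' Croot C' p.1 ∧
    (p.2 : ℕ) < (p.1 : ℕ) ∧ C' p.2 ∈ Set.range Croot ∧ Croot p.1 < C' p.2 ∧
    ∀ h : (p.1 : ℕ) < c', C' p.2 < C' ⟨(p.1 : ℕ), h⟩}

/-- `Ň(i)`: the analogous count for entries of `Cᵢ` strictly below the pivot
rows. -/
noncomputable def NcheckF (c c' : ℕ) (Croot : Fin c → ℕ) (C' : Fin c' → ℕ) : ℕ :=
  Set.ncard {p : Fin c × Fin c' | PivotRow c c' Croot C' p.1 ∧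
    (p.1 : ℕ) < (p.2 : ℕ) ∧ C' p.2 ∈ Set.range Croot ∧ Croot p.1 < C' p.2 ∧
    ∀ h : (p.1 : ℕ) < c', C' p.2 < C' ⟨(p.1 : ℕ), h⟩}

/-- Branch condition for the forward bijection: the pair `(r, s)` of rows of the
root column has `r` non-pivot, `s` pivot, and the matched entry of row `r` lies
strictly between the pivot entry `b_s` and its right neighbour `d_s`. -/
def lrcCond (c c' : ℕ) (Croot : Fin c → ℕ) (C' : Fin c' → ℕ) (r s : Fin c) : Prop :=
  ∃ hr : (r : ℕ) < c', ¬ PivotRow c c' Croot C' r ∧ PivotRow c c' Croot C' s ∧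
    ∀ hs : (s : ℕ) < c', C' ⟨(r : ℕ), hr⟩ < C' ⟨(s : ℕ), hs⟩

open Classical in
/-- Forward map: inversions of the root column plus `Ň`-pairs to inversions of
`Cᵢ` plus `N̂`-pairs. -/
noncomputable def lrcF (c c' : ℕ) (Croot : Fin c → ℕ) (C' : Fin c' → ℕ) (hpos : 0 < c') :
    (Fin c × Fin c) ⊕ (Fin c × Fin c') → (Fin c' × Fin c') ⊕ (Fin c × Fin c')
  | Sum.inl (r, s) =>
      if h : lrcCond c c' Croot C' r s then Sum.inr (s, ⟨(r : ℕ), h.choose⟩)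
      else if h2 : (r : ℕ) < c' ∧ (s : ℕ) < c' then
        Sum.inl (⟨(r : ℕ), h2.1⟩, ⟨(s : ℕ), h2.2⟩)
      else Sum.inl (⟨0, hpos⟩, ⟨0, hpos⟩)
  | Sum.inr (q1, q2) =>
      if h : (q1 : ℕ) < c' then Sum.inl (⟨(q1 : ℕ), h⟩, q2)
      else Sum.inl (⟨0, hpos⟩, q2)

open Classical in
/-- Backward map. -/
noncomputable def lrcG (c c' : ℕ) (Croot : Fin c → ℕ) (C' : Fin c' → ℕ) (hc' : c' ≤ c) :
    (Fin c' × Fin c') ⊕ (Fin c × Fin c') → (Fin c × Fin c) ⊕ (Fin c × Fin c')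
  | Sum.inl (r, s) =>
      if PivotRow c c' Croot C' (Fin.castLE hc' r) ∧
          ¬ PivotRow c c' Croot C' (Fin.castLE hc' s) ∧
          Croot (Fin.castLE hc' r) < C' s
      then Sum.inr (Fin.castLE hc' r, s)
      else Sum.inl (Fin.castLE hc' r, Fin.castLE hc' s)
  | Sum.inr (p1, p2) => Sum.inl (Fin.castLE hc' p2, p1)

/-- Lemma 4.8: `ℓ(Ĉ) = ℓ(Cᵢ) + N̂(i) − Ň(i)` for the root column `Croot` of a
fixed column `Cᵢ = C'`. -/
theorem length_of_root_column (c c' : ℕ) (hcc : c = c' ∨ c = c' + 1)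
    (C' : Fin c' → ℕ) (Croot : Fin c → ℕ)
    (hroot : HHL2 c c' Croot C')
    (hmatch : ∀ (i : Fin c) (j : Fin c'), Croot i = C' j → (i : ℕ) = (j : ℕ))
    (horder : ∀ (i i' : Fin c) (hi : (i : ℕ) < c') (hi' : (i' : ℕ) < c'),
      (∀ j : Fin c', Croot i ≠ C' j) → (∀ j : Fin c', Croot i' ≠ C' j) →
      (Croot i < Croot i' ↔ C' ⟨(i : ℕ), hi⟩ < C' ⟨(i' : ℕ), hi'⟩))
    (hbottom : ∀ i : Fin c, (i : ℕ) = c' →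
      ∀ i' : Fin c, (∀ j : Fin c', Croot i' ≠ C' j) → Croot i' ≤ Croot i) :
    (colInvF c Croot : ℤ)
      = (colInvF c' C' : ℤ) + (NhatF c c' Croot C' : ℤ)
        - (NcheckF c c' Croot C' : ℤ) := by
  classical
  obtain ⟨injR, injC, hne, hle⟩ := hroot
  have hc' : c' ≤ c := by omega
  -- degenerate case `c' = 0`
  rcases Nat.eq_zero_or_pos c' with h0 | hpos
  · subst h0
    have hA : {p : Fin c × Fin c | p.1 < p.2 ∧ Croot p.2 < Croot p.1} = ∅ := by
      ext p
      simp only [Set.mem_setOf_eq, Set.mem_empty_iff_false, iff_false, not_and]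
      intro h _
      have h1 := p.1.isLt
      have h2 := p.2.isLt
      have h3 : (p.1 : ℕ) < (p.2 : ℕ) := h
      omega
    have hB : {p : Fin 0 × Fin 0 | p.1 < p.2 ∧ C' p.2 < C' p.1} = ∅ := by
      ext p; exact p.1.elim0
    have hN1 : {p : Fin c × Fin 0 | PivotRow c 0 Croot C' p.1 ∧
        (p.2 : ℕ) < (p.1 : ℕ) ∧ C' p.2 ∈ Set.range Croot ∧ Croot p.1 < C' p.2 ∧
        ∀ h : (p.1 : ℕ) < 0, C' p.2 < C' ⟨(p.1 : ℕ), h⟩} = ∅ := by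
      ext p; exact p.2.elim0
    have hN2 : {p : Fin c × Fin 0 | PivotRow c 0 Croot C' p.1 ∧
        (p.1 : ℕ) < (p.2 : ℕ) ∧ C' p.2 ∈ Set.range Croot ∧ Croot p.1 < C' p.2 ∧
        ∀ h : (p.1 : ℕ) < 0, C' p.2 < C' ⟨(p.1 : ℕ), h⟩} = ∅ := by
      ext p; exact p.2.elim0
    simp only [colInvF, NhatF, NcheckF, hA, hB, hN1, hN2, Set.ncard_empty]
    norm_num
  -- main case
  -- basic consequences of the hypotheses
  have hnp : ∀ i : Fin c, ¬ PivotRow c c' Croot C' i →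
      ∃ h : (i : ℕ) < c', Croot i = C' ⟨(i : ℕ), h⟩ := by
    intro i hi
    unfold PivotRow at hi
    push_neg at hi
    exact ⟨hi.1, le_antisymm (hle i hi.1) (hi.2 hi.1)⟩
  have hpne : ∀ i : Fin c, PivotRow c c' Croot C' i → ∀ j : Fin c', Croot i ≠ C' j := by
    intro i hi j heq
    have hij := hmatch i j heq
    rcases hi with h | ⟨h, hlt⟩
    · have := j.isLt; omega
    · have hmk : C' ⟨(i : ℕ), h⟩ = C' j := by congr 1; exact Fin.ext hij
      rw [hmk, ← heq] at hlt
      exact lt_irrefl _ hlt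
  have hnp' : ∀ s : Fin c', ¬ PivotRow c c' Croot C' (Fin.castLE hc' s) →
      Croot (Fin.castLE hc' s) = C' s := by
    intro s hs
    obtain ⟨h, he⟩ := hnp _ hs
    exact he.trans (congrArg C' (Fin.ext rfl))
  have hrange : ∀ j : Fin c', C' j ∈ Set.range Croot →
      ¬ PivotRow c c' Croot C' (Fin.castLE hc' j) ∧ Croot (Fin.castLE hc' j) = C' j := by
    intro j hj
    obtain ⟨k, hk⟩ := hj
    have hkj : (k : ℕ) = (j : ℕ) := hmatch k j hk
    have hkc : k = Fin.castLE hc' j := Fin.ext hkj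
    rw [hkc] at hk
    exact ⟨fun hp => hpne _ hp j hk, hk⟩
  have hrange' : ∀ s : Fin c', ¬ PivotRow c c' Croot C' (Fin.castLE hc' s) →
      C' s ∈ Set.range Croot := fun s hs => ⟨_, hnp' s hs⟩
  have hbot : ∀ s : Fin c, c' ≤ (s : ℕ) → ∀ r : Fin c, r ≠ s →
      PivotRow c c' Croot C' r → Croot r < Croot s := by
    intro s hs r hrs hr
    have hs' : (s : ℕ) = c' := by have := s.isLt; omega
    exact lt_of_le_of_ne (hbottom s hs' r (hpne r hr)) fun he => hrs (injR he)
  have hpivlt : ∀ r : Fin c, PivotRow c c' Croot C' r → ∀ h : (r : ℕ) < c',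
      Croot r < C' ⟨(r : ℕ), h⟩ := by
    intro r hr h
    rcases hr with h' | ⟨h', hlt⟩
    · omega
    · exact hlt
  -- key fact for the "else" branch of the forward map
  have key : ∀ r s : Fin c, r < s → Croot s < Croot r → ¬ lrcCond c c' Croot C' r s →
      ∃ (hr : (r : ℕ) < c') (hs : (s : ℕ) < c'),
        C' ⟨(s : ℕ), hs⟩ < C' ⟨(r : ℕ), hr⟩ := by
    intro r s hlt hinv hcond
    have hlt' : (r : ℕ) < (s : ℕ) := hlt
    by_cases hPs : PivotRow c c' Croot C' s
    · have hs : (s : ℕ) < c' := by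
        by_contra hge
        push_neg at hge
        by_cases hPr : PivotRow c c' Croot C' r
        · exact absurd hinv (not_lt.2 (hbot s hge r (ne_of_lt hlt) hPr).le)
        · obtain ⟨hr, -⟩ := hnp r hPr
          exact hcond ⟨hr, hPr, hPs, fun hs' => absurd hs' (by omega)⟩
      by_cases hPr : PivotRow c c' Croot C' r
      · have hr : (r : ℕ) < c' := by omega
        exact ⟨hr, hs, (horder s r hs hr (hpne s hPs) (hpne r hPr)).1 hinv⟩
      · obtain ⟨hr, he⟩ := hnp r hPr
        refine ⟨hr, hs, ?_⟩
        have hnall : ¬ ∀ hs' : (s : ℕ) < c', C' ⟨(r : ℕ), hr⟩ < C' ⟨(s : ℕ), hs'⟩ :=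
          fun hall => hcond ⟨hr, hPr, hPs, hall⟩
        push_neg at hnall
        obtain ⟨hs', hles⟩ := hnall
        refine lt_of_le_of_ne hles fun he2 => ?_
        have h6 := injC he2
        simp only [Fin.mk.injEq] at h6
        omega
    · obtain ⟨hs, hse⟩ := hnp s hPs
      have hr : (r : ℕ) < c' := by omega
      refine ⟨hr, hs, ?_⟩
      by_cases hPr : PivotRow c c' Croot C' r
      · calc C' ⟨(s : ℕ), hs⟩ = Croot s := hse.symm
          _ < Croot r := hinv
          _ < C' ⟨(r : ℕ), hr⟩ := hpivlt r hPr hr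
      · obtain ⟨hr2, hre⟩ := hnp r hPr
        rw [← hse]
        calc Croot s < Croot r := hinv
          _ = C' ⟨(r : ℕ), hr⟩ := hre
  -- pass to finite sets
  simp only [colInvF, NhatF, NcheckF, Set.ncard_eq_toFinset_card', Set.toFinset_setOf]
  set A : Finset (Fin c × Fin c) :=
    Finset.univ.filter (fun p : Fin c × Fin c => p.1 < p.2 ∧ Croot p.2 < Croot p.1) with hAdef
  set B : Finset (Fin c' × Fin c') :=
    Finset.univ.filter (fun p : Fin c' × Fin c' => p.1 < p.2 ∧ C' p.2 < C' p.1) with hBdef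
  set N1 : Finset (Fin c × Fin c') :=
    Finset.univ.filter (fun p : Fin c × Fin c' => PivotRow c c' Croot C' p.1 ∧
      (p.2 : ℕ) < (p.1 : ℕ) ∧ C' p.2 ∈ Set.range Croot ∧ Croot p.1 < C' p.2 ∧
      ∀ h : (p.1 : ℕ) < c', C' p.2 < C' ⟨(p.1 : ℕ), h⟩) with hN1def
  set N2 : Finset (Fin c × Fin c') :=
    Finset.univ.filter (fun p : Fin c × Fin c' => PivotRow c c' Croot C' p.1 ∧
      (p.1 : ℕ) < (p.2 : ℕ) ∧ C' p.2 ∈ Set.range Croot ∧ Croot p.1 < C' p.2 ∧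
      ∀ h : (p.1 : ℕ) < c', C' p.2 < C' ⟨(p.1 : ℕ), h⟩) with hN2def
  have main : (A.disjSum N2).card = (B.disjSum N1).card := by
    refine Finset.card_nbij' (lrcF c c' Croot C' hpos) (lrcG c c' Croot C' hc') ?_ ?_ ?_ ?_
    · -- hi : F maps into B ⊕ N1
      rintro (⟨r, s⟩ | ⟨q1, q2⟩) ha
      · rw [Finset.mem_coe, Finset.inl_mem_disjSum, hAdef, Finset.mem_filter] at ha
        obtain ⟨-, hlt, hinv⟩ := ha
        by_cases hcond : lrcCond c c' Croot C' r s
        · simp only [lrcF]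
          rw [dif_pos hcond]
          rw [Finset.mem_coe, Finset.inr_mem_disjSum, hN1def, Finset.mem_filter]
          refine ⟨Finset.mem_univ _, hcond.choose_spec.2.1, hlt, ?_, ?_, ?_⟩
          · exact ⟨r, (hnp r hcond.choose_spec.1).choose_spec⟩
          · exact lt_of_lt_of_eq hinv (hnp r hcond.choose_spec.1).choose_spec
          · exact hcond.choose_spec.2.2
        · obtain ⟨hr, hs, hinvC⟩ := key r s hlt hinv hcond
          simp only [lrcF]
          rw [dif_neg hcond, dif_pos (show (r : ℕ) < c' ∧ (s : ℕ) < c' from ⟨hr, hs⟩)]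
          rw [Finset.mem_coe, Finset.inl_mem_disjSum, hBdef, Finset.mem_filter]
          exact ⟨Finset.mem_univ _, hlt, hinvC⟩
      · rw [Finset.mem_coe, Finset.inr_mem_disjSum, hN2def, Finset.mem_filter] at ha
        obtain ⟨-, hPq, h12, hrg, hblt, hall⟩ := ha
        have h1c : (q1 : ℕ) < c' := lt_trans h12 q2.isLt
        simp only [lrcF]
        rw [dif_pos h1c]
        rw [Finset.mem_coe, Finset.inl_mem_disjSum, hBdef, Finset.mem_filter]
        exact ⟨Finset.mem_univ _, h12, hall h1c⟩
    · -- hj : G maps into A ⊕ N2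
      rintro (⟨r, s⟩ | ⟨p1, p2⟩) hb
      · rw [Finset.mem_coe, Finset.inl_mem_disjSum, hBdef, Finset.mem_filter] at hb
        obtain ⟨-, hlt, hinv⟩ := hb
        by_cases hcond2 : PivotRow c c' Croot C' (Fin.castLE hc' r) ∧
            ¬ PivotRow c c' Croot C' (Fin.castLE hc' s) ∧
            Croot (Fin.castLE hc' r) < C' s
        · simp only [lrcG]
          rw [if_pos hcond2]
          rw [Finset.mem_coe, Finset.inr_mem_disjSum, hN2def, Finset.mem_filter]
          refine ⟨Finset.mem_univ _, hcond2.1, hlt, hrange' s hcond2.2.1, hcond2.2.2, ?_⟩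
          intro h
          exact lt_of_lt_of_eq hinv (congrArg C' (Fin.ext rfl))
        · simp only [lrcG]
          rw [if_neg hcond2]
          rw [Finset.mem_coe, Finset.inl_mem_disjSum, hAdef, Finset.mem_filter]
          refine ⟨Finset.mem_univ _, hlt, ?_⟩
          by_cases hPr : PivotRow c c' Croot C' (Fin.castLE hc' r)
          · by_cases hPs : PivotRow c c' Croot C' (Fin.castLE hc' s)
            · exact (horder (Fin.castLE hc' s) (Fin.castLE hc' r) s.isLt r.isLt
                (hpne _ hPs) (hpne _ hPr)).2 hinv
            · have hes := hnp' s hPs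
              have h3 : ¬ Croot (Fin.castLE hc' r) < C' s := fun hh => hcond2 ⟨hPr, hPs, hh⟩
              have h4 := hpne _ hPr s
              show Croot (Fin.castLE hc' s) < Croot (Fin.castLE hc' r)
              rw [hes]
              exact lt_of_le_of_ne (not_lt.1 h3) fun h => h4 h.symm
          · have her := hnp' r hPr
            by_cases hPs : PivotRow c c' Croot C' (Fin.castLE hc' s)
            · calc Croot (Fin.castLE hc' s)
                  < C' s := hpivlt _ hPs s.isLt
                _ < C' r := hinv
                _ = Croot (Fin.castLE hc' r) := her.symm
            · rw [hnp' s hPs, her]; exact hinv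
      · rw [Finset.mem_coe, Finset.inr_mem_disjSum, hN1def, Finset.mem_filter] at hb
        obtain ⟨-, hP1, h21, hrg, hblt, hall⟩ := hb
        simp only [lrcG]
        rw [Finset.mem_coe, Finset.inl_mem_disjSum, hAdef, Finset.mem_filter]
        refine ⟨Finset.mem_univ _, h21, ?_⟩
        rw [(hrange p2 hrg).2]
        exact hblt
    · -- left inverse : G (F a) = a
      rintro (⟨r, s⟩ | ⟨q1, q2⟩) ha
      · rw [Finset.mem_coe, Finset.inl_mem_disjSum, hAdef, Finset.mem_filter] at ha
        obtain ⟨-, hlt, hinv⟩ := ha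
        by_cases hcond : lrcCond c c' Croot C' r s
        · simp only [lrcF]
          rw [dif_pos hcond]
          simp only [lrcG]
          exact congrArg Sum.inl (Prod.ext (Fin.ext rfl) rfl)
        · obtain ⟨hr, hs, hinvC⟩ := key r s hlt hinv hcond
          simp only [lrcF]
          rw [dif_neg hcond, dif_pos (show (r : ℕ) < c' ∧ (s : ℕ) < c' from ⟨hr, hs⟩)]
          simp only [lrcG]
          rw [if_neg ?_]
          · exact congrArg Sum.inl (Prod.ext (Fin.ext rfl) (Fin.ext rfl))
          · rintro ⟨h1, h2, h3⟩
            have h1' : PivotRow c c' Croot C' r := h1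
            have h2' : ¬ PivotRow c c' Croot C' s := h2
            obtain ⟨hs2, hse⟩ := hnp s h2'
            have h3' : Croot r < C' ⟨(s : ℕ), hs2⟩ := h3
            rw [← hse] at h3'
            exact absurd h3' (not_lt.2 hinv.le)
      · rw [Finset.mem_coe, Finset.inr_mem_disjSum, hN2def, Finset.mem_filter] at ha
        obtain ⟨-, hPq, h12, hrg, hblt, hall⟩ := ha
        have h1c : (q1 : ℕ) < c' := lt_trans h12 q2.isLt
        simp only [lrcF]
        rw [dif_pos h1c]
        simp only [lrcG]
        rw [if_pos ?_]
        · exact congrArg Sum.inr (Prod.ext (Fin.ext rfl) rfl)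
        · exact ⟨hPq, (hrange q2 hrg).1, hblt⟩
    · -- right inverse : F (G b) = b
      rintro (⟨r, s⟩ | ⟨p1, p2⟩) hb
      · rw [Finset.mem_coe, Finset.inl_mem_disjSum, hBdef, Finset.mem_filter] at hb
        obtain ⟨-, hlt, hinv⟩ := hb
        by_cases hcond2 : PivotRow c c' Croot C' (Fin.castLE hc' r) ∧
            ¬ PivotRow c c' Croot C' (Fin.castLE hc' s) ∧
            Croot (Fin.castLE hc' r) < C' s
        · simp only [lrcG]
          rw [if_pos hcond2]
          simp only [lrcF]
          rw [dif_pos (show ((Fin.castLE hc' r : Fin c) : ℕ) < c' from r.isLt)]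
          exact congrArg Sum.inl (Prod.ext (Fin.ext rfl) rfl)
        · simp only [lrcG]
          rw [if_neg hcond2]
          simp only [lrcF]
          rw [dif_neg ?_, dif_pos (show ((Fin.castLE hc' r : Fin c) : ℕ) < c' ∧
              ((Fin.castLE hc' s : Fin c) : ℕ) < c' from ⟨r.isLt, s.isLt⟩)]
          · exact congrArg Sum.inl (Prod.ext (Fin.ext rfl) (Fin.ext rfl))
          · rintro ⟨hr, hnPr, hPs, hall⟩
            have hx : C' r < C' s := hall s.isLt
            exact absurd hx (not_lt.2 hinv.le)
      · rw [Finset.mem_coe, Finset.inr_mem_disjSum, hN1def, Finset.mem_filter] at hb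
        obtain ⟨-, hP1, h21, hrg, hblt, hall⟩ := hb
        simp only [lrcG, lrcF]
        rw [dif_pos (show lrcCond c c' Croot C' (Fin.castLE hc' p2) p1 from
          ⟨p2.isLt, (hrange p2 hrg).1, hP1, hall⟩)]
        exact congrArg Sum.inr (Prod.ext rfl (Fin.ext rfl))
  rw [Finset.card_disjSum, Finset.card_disjSum] at main
  omega
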